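/- The full subcategory MT^{φ,N}_K of mixed Tate filtered (φ,N)-modules is closed under kernels and cokernels inside the abelian category of weakly admissible filtered (φ,N)-modules; in particular MT^{φ,N}_K is an abelian category. -/

import Mathlib

open scoped TensorProduct
open Function Module

namespace MT

variable (p : ℕ) (K0 K : Type) [Field K0] [Field K] [Algebra K0 K]

variable {M : Type} [AddCommGroup M] [Module K0 M]

/-- The slope-`n` part of a `φ`-module: the `K0`-span of the eigenvectors
`φ m = p^n • m` (which, for modules isomorphic to sums of `(K0, pⁿσ)`,
is exactly the isoclinic slope-`n` summand). -/
def slopePart (φ : M → M) (n : ℤ) : Submodule K0 M :=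
  Submodule.span K0 {m | φ m = (p : K0) ^ n • m}

/-- The sum `M_{≤ i}` of the slope pieces of slope at most `i`. -/
def slopeLE (φ : M → M) (i : ℤ) : Submodule K0 M :=
  ⨆ n : ℤ, ⨆ _ : n ≤ i, slopePart p K0 φ n

/-- The sum `M_{≥ i}` of the slope pieces of slope at least `i`. -/
def slopeGE (φ : M → M) (i : ℤ) : Submodule K0 M :=
  ⨆ n : ℤ, ⨆ _ : i ≤ n, slopePart p K0 φ n

/-- The (generalized) slope-`a/b` part of a `φ`-module. -/
def slopePartQ (φ : M → M) (a : ℤ) (b : ℕ) : Submodule K0 M :=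
  Submodule.span K0 {m | φ^[b] m = (p : K0) ^ a • m}

/-- `φ` is a `σ`-semilinear bijection. -/
structure IsSemilinear (σ : K0 →+* K0) (φ : M → M) : Prop where
  map_add : ∀ x y, φ (x + y) = φ x + φ y
  map_smul : ∀ (c : K0) (x : M), φ (c • x) = σ c • φ x
  bijective : Function.Bijective φ

/-- A mixed Tate filtered `φ`-module: condition (1) says that `(M, φ)` is a direct
sum of its integral slope parts (equivalently `(M,φ) ≅ ⊕ (K0, p^{n_i}σ)`), and
condition (2) says that for each `i` the natural projection `F^i M_K → M_{≥ i} ⊗ K`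
is an isomorphism, i.e. `F^i` is a complement of `M_{< i} ⊗ K` in `M_K`. -/
structure IsMixedTate (φ : M → M) (F : ℤ → Submodule K (K ⊗[K0] M)) : Prop where
  internal : DirectSum.IsInternal (fun n : ℤ => slopePart p K0 φ n)
  antitone : Antitone F
  compl : ∀ i : ℤ, IsCompl (F i) ((slopeLE p K0 φ (i - 1)).baseChange K)

/-- The Newton number of a `φ`-stable subspace (sum of slopes). -/
noncomputable def tN (φ : M → M) (M' : Submodule K0 M) : ℤ :=
  ∑ᶠ n : ℤ, n * (Module.finrank K0 ↥(M' ⊓ slopePart p K0 φ n) : ℤ)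

/-- The Hodge number of a subspace, for the induced filtration. -/
noncomputable def tH (F : ℤ → Submodule K (K ⊗[K0] M)) (M' : Submodule K0 M) : ℤ :=
  ∑ᶠ i : ℤ, i * ((Module.finrank K ↥(F i ⊓ M'.baseChange K) : ℤ) -
    (Module.finrank K ↥(F (i + 1) ⊓ M'.baseChange K) : ℤ))

/-- Weak admissibility: `t_H = t_N` on the whole module and `t_H ≤ t_N` on every
`φ`-stable and `N`-stable subspace (with the induced filtration). -/
def WeaklyAdmissible (φ : M → M) (N : M →ₗ[K0] M)
    (F : ℤ → Submodule K (K ⊗[K0] M)) : Prop :=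
  tH K0 K F ⊤ = tN p K0 φ ⊤ ∧
  ∀ M' : Submodule K0 M, (∀ m ∈ M', φ m ∈ M') → (∀ m ∈ M', N m ∈ M') →
    tH K0 K F M' ≤ tN p K0 φ M'

/-- The defining property of the automorphism `η` of `M_K` attached to a mixed Tate
filtered `φ`-module: on the slope-`i` part, `η x` is the unique element of `F^i M_K`
projecting to `x` along `M_{< i} ⊗ K`. -/
def IsEta (φ : M → M) (F : ℤ → Submodule K (K ⊗[K0] M))
    (η : (K ⊗[K0] M) →ₗ[K] K ⊗[K0] M) : Prop :=
  ∀ i : ℤ, ∀ x ∈ (slopePart p K0 φ i).baseChange K,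
    η x ∈ F i ∧ η x - x ∈ (slopeLE p K0 φ (i - 1)).baseChange K


/-! ### Auxiliary lemmas -/

section Aux

open Submodule

variable {V V₁ V₂ : Type} [AddCommGroup V] [Module K0 V]
  [AddCommGroup V₁] [Module K0 V₁] [AddCommGroup V₂] [Module K0 V₂]

lemma phi_zero {σ : K0 →+* K0} {φ : V → V}
    (hsmul : ∀ (a : K0) (x : V), φ (a • x) = σ a • φ x) : φ 0 = 0 := by
  have := hsmul 0 0
  simpa using this

lemma phi_sum {φ : V → V} (hadd : ∀ x y, φ (x + y) = φ x + φ y)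
    {α : Type*} (s : Finset α) (g : α → V) :
    φ (∑ v ∈ s, g v) = ∑ v ∈ s, φ (g v) :=
  map_sum (AddMonoidHom.mk' φ hadd) g s

lemma phi_mem_span_eigen {σ : K0 →+* K0} {φ : V → V}
    (hadd : ∀ x y, φ (x + y) = φ x + φ y)
    (hsmul : ∀ (a : K0) (x : V), φ (a • x) = σ a • φ x)
    (c : K0) {x : V} (hx : x ∈ span K0 {m | φ m = c • m}) :
    φ x ∈ span K0 {m | φ m = c • m} := by
  induction hx using Submodule.span_induction with
  | mem v hv => rw [show φ v = c • v from hv]; exact smul_mem _ _ (subset_span hv)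
  | zero => rw [phi_zero K0 hsmul]; exact zero_mem _
  | add x y _ _ hx hy => rw [hadd]; exact add_mem hx hy
  | smul a x _ hx => rw [hsmul]; exact smul_mem _ _ hx

lemma map_span_eigen_le {φ : V → V} {φ₂ : V₂ → V₂} (g : V →ₗ[K0] V₂)
    (hg : ∀ m, g (φ m) = φ₂ (g m)) (c : K0) :
    Submodule.map g (span K0 {m | φ m = c • m}) ≤ span K0 {m | φ₂ m = c • m} := by
  rw [Submodule.map_span, Submodule.span_le]
  rintro _ ⟨m, hm, rfl⟩
  refine subset_span ?_
  simp only [Set.mem_setOf_eq] at hm ⊢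
  rw [← hg, hm, map_smul]

/-- Galois-type descent: a `φ`-stable subspace of the span of the `c`-eigenvectors of a
semilinear map `φ` is spanned by its own `c`-eigenvectors. -/
lemma descent {σ : K0 →+* K0} {φ : V → V}
    (hadd : ∀ x y, φ (x + y) = φ x + φ y)
    (hsmul : ∀ (a : K0) (x : V), φ (a • x) = σ a • φ x)
    (c : K0) (W : Submodule K0 V) (hW : ∀ x ∈ W, φ x ∈ W) :
    ∀ {x : V}, x ∈ W → x ∈ span K0 {m | φ m = c • m} →
      x ∈ span K0 ((W : Set V) ∩ {m | φ m = c • m}) := by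
  classical
  suffices H : ∀ (n : ℕ) (s : Finset V), s.card ≤ n → (↑s : Set V) ⊆ {m | φ m = c • m} →
      ∀ a : V → K0, (∑ v ∈ s, a v • v) ∈ W →
      (∑ v ∈ s, a v • v) ∈ span K0 ((W : Set V) ∩ {m | φ m = c • m}) by
    intro x hxW hxS
    obtain ⟨l, hls, hlx⟩ := mem_span_set.mp hxS
    have hx : x = ∑ v ∈ l.support, l v • v := by
      rw [← hlx]; rfl
    rw [hx] at hxW ⊢
    exact H l.support.card l.support le_rfl hls l hxW
  intro n
  induction n with
  | zero =>
    intro s hcard _ a _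
    have hse : s = ∅ := Finset.card_eq_zero.mp (Nat.le_zero.mp hcard)
    subst hse
    simpa using zero_mem _
  | succ n IH =>
    intro s hcard hsE a haW
    rcases Finset.eq_empty_or_nonempty s with rfl | ⟨v₀, hv₀⟩
    · simpa using zero_mem _
    have hcard' : (s.erase v₀).card ≤ n := by
      have := Finset.card_erase_of_mem hv₀; omega
    have hsE' : (↑(s.erase v₀) : Set V) ⊆ {m | φ m = c • m} :=
      fun x hx => hsE (Finset.mem_coe.mpr (Finset.erase_subset _ _ (Finset.mem_coe.mp hx)))
    by_cases ha₀ : a v₀ = 0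
    · have hx : (∑ v ∈ s, a v • v) = ∑ v ∈ s.erase v₀, a v • v :=
        (Finset.sum_erase _ (by rw [ha₀, zero_smul])).symm
      rw [hx] at haW ⊢
      exact IH _ hcard' hsE' a haW
    · set b : V → K0 := fun v => (a v₀)⁻¹ * a v with hb
      have hx₁ : (∑ v ∈ s, b v • v) = (a v₀)⁻¹ • (∑ v ∈ s, a v • v) := by
        rw [Finset.smul_sum]
        exact Finset.sum_congr rfl fun v _ => by simp only [hb]; rw [smul_smul]
      have hx₁W : (∑ v ∈ s, b v • v) ∈ W := by rw [hx₁]; exact smul_mem _ _ haW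
      have hφx₁ : φ (∑ v ∈ s, b v • v) = ∑ v ∈ s, (σ (b v) * c) • v := by
        rw [phi_sum hadd]
        refine Finset.sum_congr rfl fun v hv => ?_
        rw [hsmul, hsE (Finset.mem_coe.mpr hv), smul_smul]
      set d : V → K0 := fun v => (σ (b v) - b v) * c with hd
      set y := φ (∑ v ∈ s, b v • v) - c • (∑ v ∈ s, b v • v) with hy
      have hyW : y ∈ W := sub_mem (hW _ hx₁W) (smul_mem _ _ hx₁W)
      have hyrep : y = ∑ v ∈ s, d v • v := by
        rw [hy, hφx₁, Finset.smul_sum, ← Finset.sum_sub_distrib]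
        refine Finset.sum_congr rfl fun v _ => ?_
        simp only [hd]
        rw [smul_smul, ← sub_smul]
        congr 1
        ring
      have hbv₀ : b v₀ = 1 := by simp only [hb]; exact inv_mul_cancel₀ ha₀
      have hdv₀ : d v₀ = 0 := by simp only [hd, hbv₀, map_one, sub_self, zero_mul]
      have hyrep' : y = ∑ v ∈ s.erase v₀, d v • v := by
        rw [hyrep]
        exact (Finset.sum_erase _ (by rw [hdv₀, zero_smul])).symm
      have hyV : y ∈ span K0 ((W : Set V) ∩ {m | φ m = c • m}) := by
        rw [hyrep'] at hyW ⊢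
        exact IH _ hcard' hsE' d hyW
      have hfin : (∑ v ∈ s, b v • v) ∈ span K0 ((W : Set V) ∩ {m | φ m = c • m}) →
          (∑ v ∈ s, a v • v) ∈ span K0 ((W : Set V) ∩ {m | φ m = c • m}) := by
        intro hmem
        have : (∑ v ∈ s, a v • v) = a v₀ • (∑ v ∈ s, b v • v) := by
          rw [hx₁, smul_smul, mul_inv_cancel₀ ha₀, one_smul]
        rw [this]; exact smul_mem _ _ hmem
      by_cases hcase : ∀ v ∈ s, d v = 0
      · refine hfin (subset_span ⟨hx₁W, ?_⟩)
        show φ (∑ v ∈ s, b v • v) = c • (∑ v ∈ s, b v • v)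
        rw [hφx₁, Finset.smul_sum]
        refine Finset.sum_congr rfl fun v hv => ?_
        have hv0 := hcase v hv
        simp only [hd] at hv0
        have h0 : σ (b v) * c = b v * c := by
          have h1 : σ (b v) * c - b v * c = 0 := by rw [← sub_mul]; exact hv0
          exact sub_eq_zero.mp h1
        rw [smul_smul, h0, mul_comm]
      · push_neg at hcase
        obtain ⟨v₁, hv₁s, hdv₁⟩ := hcase
        set t : K0 := b v₁ * (d v₁)⁻¹ with ht
        set e : V → K0 := fun v => b v - t * d v with he
        have hx₂rep : (∑ v ∈ s, b v • v) - t • y = ∑ v ∈ s, e v • v := by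
          rw [hyrep, Finset.smul_sum, ← Finset.sum_sub_distrib]
          refine Finset.sum_congr rfl fun v _ => ?_
          simp only [he]
          rw [smul_smul, ← sub_smul]
        have hev₁ : e v₁ = 0 := by
          simp only [he, ht]
          rw [mul_assoc, inv_mul_cancel₀ hdv₁, mul_one, sub_self]
        have hx₂rep' : (∑ v ∈ s, b v • v) - t • y = ∑ v ∈ s.erase v₁, e v • v := by
          rw [hx₂rep]
          exact (Finset.sum_erase _ (by rw [hev₁, zero_smul])).symm
        have hcard'' : (s.erase v₁).card ≤ n := by
          have := Finset.card_erase_of_mem hv₁s; omega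
        have hsE'' : (↑(s.erase v₁) : Set V) ⊆ {m | φ m = c • m} :=
          fun x hx => hsE (Finset.mem_coe.mpr (Finset.erase_subset _ _ (Finset.mem_coe.mp hx)))
        have hx₂W : (∑ v ∈ s.erase v₁, e v • v) ∈ W := by
          rw [← hx₂rep']
          exact sub_mem hx₁W (smul_mem _ _ hyW)
        have hx₂V := IH _ hcard'' hsE'' e hx₂W
        refine hfin ?_
        have : (∑ v ∈ s, b v • v) = (∑ v ∈ s.erase v₁, e v • v) + t • y := by
          rw [← hx₂rep']; abel
        rw [this]
        exact add_mem hx₂V (smul_mem _ _ hyV)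

lemma zero_components {S : ℤ → Submodule K0 V} (hind : iSupIndep S)
    (s : Finset ℤ) (g : ℤ → V) (hg : ∀ n, g n ∈ S n) (h0 : ∀ n ∉ s, g n = 0)
    (hsum : ∑ n ∈ s, g n = 0) : ∀ n, g n = 0 := by
  intro i
  by_cases hi : i ∈ s
  · have h1 : g i = - ∑ n ∈ s.erase i, g n :=
      eq_neg_of_add_eq_zero_left ((Finset.add_sum_erase s g hi).trans hsum)
    have h2 : (∑ n ∈ s.erase i, g n) ∈ ⨆ j, ⨆ _ : j ≠ i, S j := by
      refine sum_mem fun n hn => ?_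
      have hni : n ≠ i := Finset.ne_of_mem_erase hn
      exact le_iSup₂ (f := fun (j : ℤ) (_ : j ≠ i) => S j) n hni (hg n)
    exact Submodule.disjoint_def.mp (iSupIndep_def.mp hind i) _ (hg i) (h1 ▸ neg_mem h2)
  · exact h0 i hi

lemma eq_components {S : ℤ → Submodule K0 V} (hind : iSupIndep S)
    (s s' : Finset ℤ) (g g' : ℤ → V) (hg : ∀ n, g n ∈ S n) (hg' : ∀ n, g' n ∈ S n)
    (h0 : ∀ n ∉ s, g n = 0) (h0' : ∀ n ∉ s', g' n = 0)
    {x : V} (hs : ∑ n ∈ s, g n = x) (hs' : ∑ n ∈ s', g' n = x) : ∀ n, g n = g' n := by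
  have key : ∀ n, g n - g' n = 0 := by
    refine zero_components K0 hind (s ∪ s') (fun n => g n - g' n)
      (fun n => sub_mem (hg n) (hg' n))
      (fun n hn => by
        show g n - g' n = 0
        rw [h0 n (fun h => hn (Finset.mem_union_left _ h)),
          h0' n (fun h => hn (Finset.mem_union_right _ h)), sub_self])
      ?_
    rw [Finset.sum_sub_distrib,
      ← Finset.sum_subset Finset.subset_union_left (fun n _ hn => h0 n hn),
      ← Finset.sum_subset Finset.subset_union_right (fun n _ hn => h0' n hn),
      hs, hs', sub_self]
  exact fun n => sub_eq_zero.mp (key n)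

lemma components_mem {S : ℤ → Submodule K0 V} (hind : iSupIndep S)
    {R : Submodule K0 V} (hR : R ≤ ⨆ n, S n ⊓ R)
    (s : Finset ℤ) (g : ℤ → V) (hg : ∀ n, g n ∈ S n) (h0 : ∀ n ∉ s, g n = 0)
    {x : V} (hsum : ∑ n ∈ s, g n = x) (hx : x ∈ R) : ∀ n, g n ∈ R := by
  obtain ⟨l, hl, hlsum⟩ := (Submodule.mem_iSup_iff_exists_finsupp _ _).mp (hR hx)
  have hlsum' : ∑ n ∈ l.support, l n = x := hlsum
  have := eq_components K0 hind s l.support g (fun n => l n)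
    hg (fun n => ((hl n).1 : l n ∈ S n))
    h0 (fun n hn => Finsupp.notMem_support_iff.mp hn) hsum hlsum'
  exact fun n => (this n) ▸ (hl n).2

lemma isCompl_biSup {S : ℤ → Submodule K0 V} (hind : iSupIndep S) (hsup : (⨆ n, S n) = ⊤)
    (P : ℤ → Prop) :
    IsCompl (⨆ n, ⨆ _ : P n, S n) (⨆ n, ⨆ _ : ¬ P n, S n) := by
  classical
  constructor
  · rw [Submodule.disjoint_def]
    intro x hx1 hx2
    obtain ⟨l, hl, hsum⟩ := (Submodule.mem_iSup_iff_exists_finsupp _ _).mp hx1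
    obtain ⟨l', hl', hsum'⟩ := (Submodule.mem_iSup_iff_exists_finsupp _ _).mp hx2
    have hle : ∀ (n : ℤ) (Q : Prop), (⨆ _ : Q, S n) ≤ S n := fun n Q => iSup_le fun _ => le_rfl
    have heq := eq_components K0 hind l.support l'.support (fun n => l n) (fun n => l' n)
      (fun n => hle n _ (hl n)) (fun n => hle n _ (hl' n))
      (fun n hn => Finsupp.notMem_support_iff.mp hn)
      (fun n hn => Finsupp.notMem_support_iff.mp hn)
      (hsum : ∑ n ∈ l.support, l n = x) (hsum' : ∑ n ∈ l'.support, l' n = x)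
    have hzero : ∀ n, l n = 0 := by
      intro n
      by_cases hP : P n
      · have hb : l' n ∈ (⊥ : Submodule K0 V) := by
          rw [← iSup_neg (not_not_intro hP)]; exact hl' n
        rw [Submodule.mem_bot] at hb
        exact (heq n).trans hb
      · have hb : l n ∈ (⊥ : Submodule K0 V) := by
          rw [← iSup_neg hP]; exact hl n
        exact Submodule.mem_bot _ |>.mp hb
    have : x = 0 := by
      rw [← (hsum : ∑ n ∈ l.support, l n = x)]
      exact Finset.sum_eq_zero fun n _ => hzero n
    exact this
  · rw [codisjoint_iff_le_sup, ← hsup]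
    refine iSup_le fun n => ?_
    by_cases hP : P n
    · exact le_sup_of_le_left (le_iSup_of_le n (le_iSup_of_le hP le_rfl))
    · exact le_sup_of_le_right (le_iSup_of_le n (le_iSup_of_le hP le_rfl))

lemma map_biSup_le {P : ℤ → Prop} (g : V →ₗ[K0] V₂) (T : ℤ → Submodule K0 V)
    (T₂ : ℤ → Submodule K0 V₂) (hT : ∀ n, Submodule.map g (T n) ≤ T₂ n) :
    Submodule.map g (⨆ n, ⨆ _ : P n, T n) ≤ ⨆ n, ⨆ _ : P n, T₂ n := by
  rw [Submodule.map_iSup]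
  refine iSup_mono fun n => ?_
  rw [Submodule.map_iSup]
  exact iSup_mono fun h => hT n

lemma baseChange_map (g : V →ₗ[K0] V₂) (q : Submodule K0 V) :
    Submodule.map (g.baseChange K) (q.baseChange K) = (Submodule.map g q).baseChange K := by
  simp only [Submodule.baseChange_eq_span, Submodule.map_span, Submodule.map_coe]
  congr 1
  ext z
  constructor
  · rintro ⟨_, ⟨m, hm, rfl⟩, rfl⟩
    exact ⟨g m, ⟨m, hm, rfl⟩, by simp⟩
  · rintro ⟨_, ⟨m, hm, rfl⟩, rfl⟩
    exact ⟨(1 : K) ⊗ₜ[K0] m, ⟨m, hm, rfl⟩, by simp⟩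

lemma range_baseChange (g : V →ₗ[K0] V₂) :
    LinearMap.range (g.baseChange K) = (LinearMap.range g).baseChange K := by
  have h := baseChange_map (K0 := K0) (K := K) g ⊤
  rw [Submodule.baseChange_top, Submodule.map_top, Submodule.map_top] at h
  exact h

lemma baseChange_mono {q q' : Submodule K0 V} (h : q ≤ q') :
    q.baseChange K ≤ q'.baseChange K := by
  rw [Submodule.baseChange_eq_span, Submodule.baseChange_eq_span]
  exact Submodule.span_mono (Submodule.map_mono h)

lemma baseChange_exact (g1 : V₁ →ₗ[K0] V) (g2 : V →ₗ[K0] V₂)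
    (hex : LinearMap.ker g2 = LinearMap.range g1) :
    LinearMap.ker (g2.baseChange K) = LinearMap.range (g1.baseChange K) := by
  have h := Module.Flat.lTensor_exact K (LinearMap.exact_iff.mpr hex)
  rw [LinearMap.exact_iff] at h
  ext x
  have e2 : (g2.baseChange K) x = (LinearMap.lTensor K g2) x := by
    rw [LinearMap.baseChange_eq_ltensor]
  constructor
  · intro hx
    rw [LinearMap.mem_ker] at hx
    have hx' : x ∈ LinearMap.ker (LinearMap.lTensor K g2) := by
      rw [LinearMap.mem_ker, ← e2]; exact hx
    rw [h] at hx'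
    obtain ⟨y, hy⟩ := hx'
    exact ⟨y, by rw [LinearMap.baseChange_eq_ltensor]; exact hy⟩
  · rintro ⟨y, rfl⟩
    rw [LinearMap.mem_ker, e2]
    have hy : (LinearMap.lTensor K g1) y ∈ LinearMap.range (LinearMap.lTensor K g1) :=
      LinearMap.mem_range_self _ y
    rw [← h, LinearMap.mem_ker] at hy
    have e1 : (g1.baseChange K) y = (LinearMap.lTensor K g1) y := by
      rw [LinearMap.baseChange_eq_ltensor]
    rw [e1]
    exact hy

/-- The projection onto `A` along `B`, as an endomorphism. -/
noncomputable def prMap (A B : Submodule K0 V) (h : IsCompl A B) : V →ₗ[K0] V :=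
  A.subtype ∘ₗ (A.linearProjOfIsCompl B h)

lemma prMap_eq_of {A B : Submodule K0 V} (h : IsCompl A B) {x a : V}
    (ha : a ∈ A) (hb : x - a ∈ B) : prMap K0 A B h x = a := by
  have hx : x = a + (x - a) := by abel
  rw [prMap, LinearMap.comp_apply, hx, map_add,
    show (A.linearProjOfIsCompl B h) a = ⟨a, ha⟩ from
      A.linearProjOfIsCompl_apply_left h ⟨a, ha⟩,
    show (A.linearProjOfIsCompl B h) (x - a) = 0 from
      A.linearProjOfIsCompl_apply_right h ⟨x - a, hb⟩]
  simp

lemma prMap_fix {A B : Submodule K0 V} (h : IsCompl A B) {a : V} (ha : a ∈ A) :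
    prMap K0 A B h a = a :=
  prMap_eq_of K0 h ha (by rw [sub_self]; exact zero_mem _)

lemma prMap_range {A B : Submodule K0 V} (h : IsCompl A B) :
    LinearMap.range (prMap K0 A B h) = A := by
  apply le_antisymm
  · rintro _ ⟨x, rfl⟩
    exact ((A.linearProjOfIsCompl B h) x).2
  · intro a ha
    exact ⟨a, prMap_fix K0 h ha⟩

lemma prMap_baseChange_fix {A B : Submodule K0 V} (h : IsCompl A B) {x : K ⊗[K0] V}
    (hx : x ∈ A.baseChange K) : (prMap K0 A B h).baseChange K x = x := by
  rw [Submodule.baseChange_eq_span] at hx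
  induction hx using Submodule.span_induction with
  | mem z hz =>
    obtain ⟨m, hm, rfl⟩ := hz
    rw [show ((TensorProduct.mk K0 K V) 1) m = (1 : K) ⊗ₜ[K0] m from rfl,
      LinearMap.baseChange_tmul, prMap_fix K0 h hm]
  | zero => rw [map_zero]
  | add x y _ _ hx hy => rw [map_add, hx, hy]
  | smul a x _ hx => rw [map_smul, hx]

lemma prMap_comm {A B : Submodule K0 V} {A' B' : Submodule K0 V₁}
    (hM : IsCompl A B) (hL : IsCompl A' B') (ι : V₁ →ₗ[K0] V)
    (hA : ∀ x ∈ A', ι x ∈ A) (hB : ∀ x ∈ B', ι x ∈ B) (l : V₁) :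
    prMap K0 A B hM (ι l) = ι (prMap K0 A' B' hL l) := by
  have hl : l ∈ A' ⊔ B' := by rw [hL.sup_eq_top]; exact Submodule.mem_top
  obtain ⟨a, ha, b, hb, rfl⟩ := Submodule.mem_sup.mp hl
  have h1 : prMap K0 A' B' hL (a + b) = a := prMap_eq_of K0 hL ha (by simpa using hb)
  rw [h1, map_add]
  exact prMap_eq_of K0 hM (hA a ha) (by simpa using hB b hb)

/-- Key lemma: if `m` lies in the slope-`k` part and `φ m ≡ pp^n • m` modulo a
`φ`-stable subspace `R`, with `k ≠ n`, then `m ∈ R` (otherwise the slope parts would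
fail to be independent). -/
lemma eig_mem {σ : K0 →+* K0} {φ : V → V}
    (hadd : ∀ x y, φ (x + y) = φ x + φ y)
    (hsmul : ∀ (a : K0) (x : V), φ (a • x) = σ a • φ x)
    {pp : K0}
    {S : ℤ → Submodule K0 V} (hS : ∀ j, S j = span K0 {m | φ m = pp ^ j • m})
    (hind : iSupIndep S) {k n : ℤ} (hkn : k ≠ n)
    (R : Submodule K0 V) (hRstab : ∀ x ∈ R, φ x ∈ R)
    {m : V} (hm : m ∈ S k) (hrel : φ m - pp ^ n • m ∈ R) : m ∈ R := by
  set E : Set V := {x | φ x = pp ^ k • x} with hE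
  have hmS : m ∈ span K0 E := hS k ▸ hm
  have hφm : φ m ∈ span K0 E := phi_mem_span_eigen K0 hadd hsmul _ hmS
  set R₀ := R ⊓ S k with hR₀def
  have hR₀stab : ∀ x ∈ R₀, φ x ∈ R₀ := fun x hx =>
    ⟨hRstab x hx.1, (hS k) ▸ phi_mem_span_eigen K0 hadd hsmul _ ((hS k) ▸ hx.2)⟩
  have hrel₀ : φ m - pp ^ n • m ∈ R₀ :=
    ⟨hrel, (hS k) ▸ sub_mem hφm (smul_mem _ _ hmS)⟩
  set W := R₀ ⊔ span K0 {m} with hW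
  have hmW : m ∈ W := Submodule.mem_sup_right (subset_span rfl)
  have hWS : W ≤ span K0 E := by
    refine sup_le ?_ ?_
    · exact (hS k ▸ inf_le_right : R₀ ≤ span K0 E)
    · rw [Submodule.span_le]; rintro _ rfl; exact hmS
  have hWstab : ∀ x ∈ W, φ x ∈ W := by
    intro x hx
    obtain ⟨r, hr, z, hz, rfl⟩ := Submodule.mem_sup.mp hx
    obtain ⟨a, rfl⟩ := Submodule.mem_span_singleton.mp hz
    rw [hadd, hsmul]
    refine add_mem (Submodule.mem_sup_left (hR₀stab r hr)) ?_
    have hsplit : φ m = pp ^ n • m + (φ m - pp ^ n • m) := by abel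
    rw [hsplit, smul_add]
    refine add_mem ?_ (Submodule.mem_sup_left (smul_mem _ _ hrel₀))
    rw [smul_smul]
    exact Submodule.mem_sup_right (Submodule.mem_span_singleton.mpr ⟨σ a * pp ^ n, rfl⟩)
  by_contra hmR
  have hmR₀ : m ∉ R₀ := fun hh => hmR hh.1
  have hdesc : m ∈ span K0 ((W : Set V) ∩ E) :=
    descent K0 hadd hsmul (pp ^ k) W hWstab hmW hmS
  have hex : ∃ e, e ∈ (W : Set V) ∩ E ∧ e ∉ R₀ := by
    by_contra hno
    push_neg at hno
    exact hmR₀ (Submodule.span_le.mpr (fun e he => hno e he) hdesc)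
  obtain ⟨e, ⟨heW, heE⟩, heR₀⟩ := hex
  obtain ⟨r, hr, z, hz, hezr⟩ := Submodule.mem_sup.mp heW
  obtain ⟨a, rfl⟩ := Submodule.mem_span_singleton.mp hz
  have ha : a ≠ 0 := by
    rintro rfl
    exact heR₀ (by rw [← hezr, zero_smul, add_zero]; exact hr)
  have heEq : φ e = pp ^ k • e := heE
  have hφe : φ e = φ r + σ a • φ m := by
    rw [← hezr, hadd, hsmul]
  have h0 : φ r + σ a • φ m = pp ^ k • r + (pp ^ k * a) • m := by
    rw [← hφe, heEq, ← hezr, smul_add, smul_smul]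
  have hcoeff : (σ a * pp ^ n - pp ^ k * a) • m ∈ R₀ := by
    have h3 : (σ a * pp ^ n - pp ^ k * a) • m
        = (pp ^ k • r - φ r) - σ a • (φ m - pp ^ n • m) := by
      linear_combination (norm := module) h0
    rw [h3]
    exact sub_mem (sub_mem (smul_mem _ _ hr) (hR₀stab r hr)) (smul_mem _ _ hrel₀)
  have haeq : σ a * pp ^ n = pp ^ k * a := by
    by_contra hne
    exact hmR₀ ((Submodule.smul_mem_iff _ (sub_ne_zero.mpr hne)).mp hcoeff)
  have hσa : σ a ≠ 0 := fun hh => ha (by simpa using σ.injective (by rw [hh, map_zero]))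
  have heE' : φ (a⁻¹ • e) = pp ^ n • (a⁻¹ • e) := by
    rw [hsmul, heEq, map_inv₀, smul_smul, smul_smul]
    congr 1
    field_simp
    linear_combination -haeq
  have he0 : e ≠ 0 := fun hh => heR₀ (hh ▸ zero_mem _)
  have h1 : a⁻¹ • e ∈ S n := (hS n) ▸ subset_span heE'
  have h2 : a⁻¹ • e ∈ ⨆ j, ⨆ _ : j ≠ n, S j := by
    have heSk : e ∈ S k := (hS k) ▸ hWS heW
    exact le_iSup₂ (f := fun (j : ℤ) (_ : j ≠ n) => S j) k hkn (smul_mem _ _ heSk)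
  have hzero := Submodule.disjoint_def.mp (iSupIndep_def.mp hind n) _ h1 h2
  rw [smul_eq_zero] at hzero
  rcases hzero with hz | hz
  · exact ha (by simpa using hz)
  · exact he0 hz

end Aux

/-- Mixed Tate filtered `(φ,N)`-modules are closed under kernels and
cokernels (computed in the abelian category of weakly admissible filtered
`(φ,N)`-modules, i.e. on underlying vector spaces with the induced structures).
Kernels and cokernels are characterized abstractly: any `(L, φL, F_L)` receiving an
injection onto `ker f` with the induced structures, resp. any `(Q, φQ, F_Q)` given by
a surjection with kernel `range f` and the image filtration, is again mixed Tate.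
In particular `MT^{φ,N}_K` is an abelian category. -/
theorem kernel_cokernel_mixedTate
    {M' : Type} [AddCommGroup M'] [Module K0 M']
    (σ : K0 →+* K0) (hσp : σ (p : K0) = (p : K0)) (hp : (p : K0) ≠ 0)
    (φ : M → M) (F : ℤ → Submodule K (K ⊗[K0] M))
    (φ' : M' → M') (F' : ℤ → Submodule K (K ⊗[K0] M'))
    (hφ : IsSemilinear K0 σ φ) (hφ' : IsSemilinear K0 σ φ')
    (N : M →ₗ[K0] M) (hNφ : ∀ m, N (φ m) = (p : K0) • φ (N m))
    (N' : M' →ₗ[K0] M') (hNφ' : ∀ m, N' (φ' m) = (p : K0) • φ' (N' m))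
    (h : IsMixedTate p K0 K φ F) (h' : IsMixedTate p K0 K φ' F')
    (f : M →ₗ[K0] M')
    (hfφ : ∀ m, f (φ m) = φ' (f m)) (hfN : ∀ m, f (N m) = N' (f m))
    (hfF : ∀ i, Submodule.map (f.baseChange K) (F i) ≤ F' i) :
    -- the kernel of `f`, with the induced structures, is mixed Tate
    (∀ (L : Type) [AddCommGroup L] [Module K0 L] (ι : L →ₗ[K0] M)
       (φL : L → L) (FL : ℤ → Submodule K (K ⊗[K0] L)),
       Function.Injective ι →
       LinearMap.range ι = LinearMap.ker f →
       (∀ l, ι (φL l) = φ (ι l)) →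
       (∀ i, FL i = Submodule.comap (ι.baseChange K) (F i)) →
       IsMixedTate p K0 K φL FL) ∧
    -- the cokernel of `f`, with the induced structures, is mixed Tate
    (∀ (Q : Type) [AddCommGroup Q] [Module K0 Q] (π : M' →ₗ[K0] Q)
       (φQ : Q → Q) (FQ : ℤ → Submodule K (K ⊗[K0] Q)),
       Function.Surjective π →
       LinearMap.ker π = LinearMap.range f →
       (∀ m, π (φ' m) = φQ (π m)) →
       (∀ i, FQ i = Submodule.map (π.baseChange K) (F' i)) →
       IsMixedTate p K0 K φQ FQ) := by
  classical
  obtain ⟨hindM, hsupM⟩ :=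
    (DirectSum.isInternal_submodule_iff_iSupIndep_and_iSup_eq_top _).mp h.internal
  obtain ⟨hindM', hsupM'⟩ :=
    (DirectSum.isInternal_submodule_iff_iSupIndep_and_iSup_eq_top _).mp h'.internal
  have hstabM : ∀ n : ℤ, ∀ x ∈ slopePart p K0 φ n, φ x ∈ slopePart p K0 φ n :=
    fun n x hx => phi_mem_span_eigen K0 hφ.map_add hφ.map_smul _ hx
  have hstabM' : ∀ n : ℤ, ∀ x ∈ slopePart p K0 φ' n, φ' x ∈ slopePart p K0 φ' n :=
    fun n x hx => phi_mem_span_eigen K0 hφ'.map_add hφ'.map_smul _ hx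
  have hmapf : ∀ n : ℤ, Submodule.map f (slopePart p K0 φ n) ≤ slopePart p K0 φ' n :=
    fun n => map_span_eigen_le K0 f hfφ _
  -- the kernel of `f` is a "graded" subspace
  have hGker : LinearMap.ker f ≤ ⨆ n : ℤ, slopePart p K0 φ n ⊓ LinearMap.ker f := by
    intro x hx
    have hxT : x ∈ ⨆ n : ℤ, slopePart p K0 φ n := hsupM ▸ Submodule.mem_top
    obtain ⟨l, hl, hsum⟩ := (Submodule.mem_iSup_iff_exists_finsupp _ _).mp hxT
    have hsum' : ∑ n ∈ l.support, l n = x := hsum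
    have hfl : ∀ n, f (l n) = 0 := by
      refine zero_components K0 hindM' l.support (fun n => f (l n))
        (fun n => hmapf n ⟨l n, hl n, rfl⟩)
        (fun n hn => by
          show f (l n) = 0
          rw [Finsupp.notMem_support_iff.mp hn, map_zero])
        ?_
      rw [← map_sum, hsum']
      exact LinearMap.mem_ker.mp hx
    rw [← hsum']
    refine sum_mem fun n _ => ?_
    exact le_iSup (fun n => slopePart p K0 φ n ⊓ LinearMap.ker f) n
      ⟨hl n, LinearMap.mem_ker.mpr (hfl n)⟩
  -- the range of `f` is a "graded" subspace
  have hGrange : LinearMap.range f ≤ ⨆ n : ℤ, slopePart p K0 φ' n ⊓ LinearMap.range f := by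
    rintro _ ⟨x, rfl⟩
    have hxT : x ∈ ⨆ n : ℤ, slopePart p K0 φ n := hsupM ▸ Submodule.mem_top
    obtain ⟨l, hl, hsum⟩ := (Submodule.mem_iSup_iff_exists_finsupp _ _).mp hxT
    have hsum' : ∑ n ∈ l.support, l n = x := hsum
    rw [← hsum', map_sum]
    refine sum_mem fun n _ => ?_
    exact le_iSup (fun n => slopePart p K0 φ' n ⊓ LinearMap.range f) n
      ⟨hmapf n ⟨l n, hl n, rfl⟩, ⟨l n, rfl⟩⟩
  have hmapfLE : ∀ i : ℤ, Submodule.map (f.baseChange K) ((slopeLE p K0 φ i).baseChange K)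
      ≤ (slopeLE p K0 φ' i).baseChange K := by
    intro i
    rw [baseChange_map]
    exact baseChange_mono K0 K (map_biSup_le K0 f _ _ hmapf)
  constructor
  · -- kernels
    intro L _ _ ι φL FL hι hrange hιφ hFL
    have hmapι : ∀ n : ℤ, Submodule.map ι (slopePart p K0 φL n) ≤ slopePart p K0 φ n :=
      fun n => map_span_eigen_le K0 ι hιφ _
    have hK1 : ∀ n : ℤ, Submodule.map ι (slopePart p K0 φL n)
        = slopePart p K0 φ n ⊓ LinearMap.ker f := by
      intro n
      refine le_antisymm (le_inf (hmapι n) ?_) ?_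
      · refine (Submodule.map_mono le_top).trans ?_
        rw [Submodule.map_top, hrange]
      · rintro x ⟨hxS, hxK⟩
        have hWstab : ∀ y ∈ slopePart p K0 φ n ⊓ LinearMap.ker f,
            φ y ∈ slopePart p K0 φ n ⊓ LinearMap.ker f := by
          intro y hy
          obtain ⟨hy1, hy2⟩ := Submodule.mem_inf.mp hy
          refine Submodule.mem_inf.mpr ⟨hstabM n y hy1, ?_⟩
          rw [LinearMap.mem_ker, hfφ, LinearMap.mem_ker.mp hy2, phi_zero K0 hφ'.map_smul]
        have hdesc := descent K0 hφ.map_add hφ.map_smul ((p : K0) ^ n)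
          (slopePart p K0 φ n ⊓ LinearMap.ker f) hWstab ⟨hxS, hxK⟩ hxS
        refine Submodule.span_le.mpr ?_ hdesc
        rintro v ⟨hvW, hvE⟩
        have hvK : v ∈ LinearMap.range ι := by
          rw [hrange]; exact hvW.2
        obtain ⟨lv, rfl⟩ := hvK
        have heq : ι (φL lv) = ι ((p : K0) ^ n • lv) := by
          rw [hιφ, map_smul]; exact hvE
        have hlv : φL lv = (p : K0) ^ n • lv := hι heq
        exact ⟨lv, Submodule.subset_span hlv, rfl⟩
    have hmind : iSupIndep (fun j : ℤ => Submodule.map ι (slopePart p K0 φL j)) := by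
      have he : (fun j : ℤ => Submodule.map ι (slopePart p K0 φL j))
          = fun j => slopePart p K0 φ j ⊓ LinearMap.ker f := funext hK1
      rw [he]
      exact hindM.mono fun j => inf_le_left
    have hindL : iSupIndep (fun n : ℤ => slopePart p K0 φL n) := by
      rw [iSupIndep_def]
      intro n
      rw [Submodule.disjoint_def]
      intro x hx1 hx2
      have h1 : ι x ∈ Submodule.map ι (slopePart p K0 φL n) := Submodule.mem_map_of_mem hx1
      have h2 : ι x ∈ ⨆ j, ⨆ _ : j ≠ n, Submodule.map ι (slopePart p K0 φL j) := by
        have hm : ι x ∈ Submodule.map ι (⨆ j, ⨆ _ : j ≠ n, slopePart p K0 φL j) :=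
          Submodule.mem_map_of_mem hx2
        simpa only [Submodule.map_iSup] using hm
      have h0 : ι x = 0 :=
        Submodule.disjoint_def.mp (iSupIndep_def.mp hmind n) _ h1 h2
      exact hι (by rw [h0, map_zero])
    have hsupL : (⨆ n : ℤ, slopePart p K0 φL n) = ⊤ := by
      rw [Submodule.eq_top_iff']
      intro l
      have h1 : ι l ∈ LinearMap.ker f := by
        rw [← hrange]; exact LinearMap.mem_range_self ι l
      have h2 := hGker h1
      have h3 : ι l ∈ ⨆ n : ℤ, Submodule.map ι (slopePart p K0 φL n) := by
        simpa only [hK1] using h2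
      rw [← Submodule.map_iSup] at h3
      obtain ⟨l', hl', hll⟩ := h3
      exact (hι hll) ▸ hl'
    refine ⟨(DirectSum.isInternal_submodule_iff_iSupIndep_and_iSup_eq_top _).mpr
      ⟨hindL, hsupL⟩, ?_, ?_⟩
    · intro i j hij
      rw [hFL, hFL]
      exact Submodule.comap_mono (h.antitone hij)
    · intro i
      have hcomplM : IsCompl (slopeLE p K0 φ (i - 1)) (slopeGE p K0 φ i) := by
        have hc := isCompl_biSup K0 hindM hsupM (fun n => n ≤ i - 1)
        have hGE : (⨆ n : ℤ, ⨆ _ : ¬ (n ≤ i - 1), slopePart p K0 φ n)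
            = slopeGE p K0 φ i := by
          refine iSup_congr fun n => ?_
          exact iSup_congr_Prop (by omega) (fun _ => rfl)
        rw [hGE] at hc
        exact hc
      have hcomplL : IsCompl (slopeLE p K0 φL (i - 1)) (slopeGE p K0 φL i) := by
        have hc := isCompl_biSup K0 hindL hsupL (fun n => n ≤ i - 1)
        have hGE : (⨆ n : ℤ, ⨆ _ : ¬ (n ≤ i - 1), slopePart p K0 φL n)
            = slopeGE p K0 φL i := by
          refine iSup_congr fun n => ?_
          exact iSup_congr_Prop (by omega) (fun _ => rfl)
        rw [hGE] at hc
        exact hc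
      have hmapLE : ∀ x ∈ slopeLE p K0 φL (i - 1), ι x ∈ slopeLE p K0 φ (i - 1) :=
        fun x hx => map_biSup_le K0 ι _ _ hmapι ⟨x, hx, rfl⟩
      have hmapGE : ∀ x ∈ slopeGE p K0 φL i, ι x ∈ slopeGE p K0 φ i :=
        fun x hx => map_biSup_le K0 ι _ _ hmapι ⟨x, hx, rfl⟩
      have hιK : Function.Injective (ι.baseChange K) := by
        rw [LinearMap.baseChange_eq_ltensor]
        exact Module.Flat.lTensor_preserves_injective_linearMap ι hι
      have hexactK : LinearMap.ker (f.baseChange K) = LinearMap.range (ι.baseChange K) :=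
        baseChange_exact K0 K ι f hrange.symm
      constructor
      · rw [Submodule.disjoint_def]
        intro x hx1 hx2
        have h1 : ι.baseChange K x ∈ F i := by
          rw [hFL i] at hx1; exact hx1
        have h2 : ι.baseChange K x ∈ (slopeLE p K0 φ (i - 1)).baseChange K := by
          have hm : ι.baseChange K x
              ∈ Submodule.map (ι.baseChange K) ((slopeLE p K0 φL (i - 1)).baseChange K) :=
            Submodule.mem_map_of_mem hx2
          rw [baseChange_map] at hm
          exact baseChange_mono K0 K (map_biSup_le K0 ι _ _ hmapι) hm
        have h0 := Submodule.disjoint_def.mp (h.compl i).disjoint _ h1 h2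
        exact hιK (by rw [h0, map_zero])
      · rw [codisjoint_iff_le_sup]
        intro x _
        have hmem : ι.baseChange K x ∈ F i ⊔ (slopeLE p K0 φ (i - 1)).baseChange K := by
          rw [(h.compl i).sup_eq_top]; exact Submodule.mem_top
        obtain ⟨u, hu, v, hv, huv⟩ := Submodule.mem_sup.mp hmem
        have hcomp0 : f ∘ₗ ι = 0 := by
          ext l
          have : ι l ∈ LinearMap.ker f := by
            rw [← hrange]; exact LinearMap.mem_range_self ι l
          simpa using LinearMap.mem_ker.mp this
        have hfι : f.baseChange K (ι.baseChange K x) = 0 := by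
          have hc : (f ∘ₗ ι).baseChange K x = (f.baseChange K) ((ι.baseChange K) x) := by
            rw [LinearMap.baseChange_comp]; rfl
          rw [← hc, hcomp0, LinearMap.baseChange_zero]; rfl
        have hfu : f.baseChange K u ∈ F' i := hfF i (Submodule.mem_map_of_mem hu)
        have hfv : f.baseChange K v ∈ (slopeLE p K0 φ' (i - 1)).baseChange K :=
          hmapfLE (i - 1) (Submodule.mem_map_of_mem hv)
        have hsum0 : f.baseChange K u + f.baseChange K v = 0 := by
          rw [← map_add, huv, hfι]
        have hfu0 : f.baseChange K u = 0 := by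
          have hne : f.baseChange K u = - f.baseChange K v := eq_neg_of_add_eq_zero_left hsum0
          exact Submodule.disjoint_def.mp (h'.compl i).disjoint _ hfu (hne ▸ neg_mem hfv)
        have hfv0 : f.baseChange K v = 0 := by
          rw [hfu0, zero_add] at hsum0; exact hsum0
        obtain ⟨a, ha⟩ : u ∈ LinearMap.range (ι.baseChange K) := by
          rw [← hexactK]; exact LinearMap.mem_ker.mpr hfu0
        obtain ⟨b, hb⟩ : v ∈ LinearMap.range (ι.baseChange K) := by
          rw [← hexactK]; exact LinearMap.mem_ker.mpr hfv0
        have hxab : x = a + b := hιK (by rw [map_add, ha, hb, huv])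
        have haF : a ∈ FL i := by
          rw [hFL]
          show ι.baseChange K a ∈ F i
          rw [ha]; exact hu
        have hbA : b ∈ (slopeLE p K0 φL (i - 1)).baseChange K := by
          have hcomm : prMap K0 (slopeLE p K0 φ (i - 1)) (slopeGE p K0 φ i) hcomplM ∘ₗ ι
              = ι ∘ₗ prMap K0 (slopeLE p K0 φL (i - 1)) (slopeGE p K0 φL i) hcomplL := by
            ext l
            exact prMap_comm K0 hcomplM hcomplL ι hmapLE hmapGE l
          have hKcomm : (prMap K0 (slopeLE p K0 φ (i - 1)) (slopeGE p K0 φ i)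
                hcomplM).baseChange K (ι.baseChange K b)
              = ι.baseChange K ((prMap K0 (slopeLE p K0 φL (i - 1)) (slopeGE p K0 φL i)
                hcomplL).baseChange K b) := by
            have h1 : ((prMap K0 (slopeLE p K0 φ (i - 1)) (slopeGE p K0 φ i) hcomplM ∘ₗ ι).baseChange K)
                = ((ι ∘ₗ prMap K0 (slopeLE p K0 φL (i - 1)) (slopeGE p K0 φL i) hcomplL).baseChange K) := by
              rw [hcomm]
            rw [LinearMap.baseChange_comp, LinearMap.baseChange_comp] at h1
            simpa using LinearMap.congr_fun h1 b
          have hfix : (prMap K0 (slopeLE p K0 φ (i - 1)) (slopeGE p K0 φ i)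
              hcomplM).baseChange K (ι.baseChange K b) = ι.baseChange K b := by
            refine prMap_baseChange_fix K0 K hcomplM ?_
            rw [hb]; exact hv
          have hb2 : ι.baseChange K ((prMap K0 (slopeLE p K0 φL (i - 1))
              (slopeGE p K0 φL i) hcomplL).baseChange K b) = ι.baseChange K b := by
            rw [← hKcomm, hfix]
          have hbfix : (prMap K0 (slopeLE p K0 φL (i - 1)) (slopeGE p K0 φL i)
              hcomplL).baseChange K b = b := hιK hb2
          rw [← hbfix]
          have hmem2 : (prMap K0 (slopeLE p K0 φL (i - 1)) (slopeGE p K0 φL i)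
                hcomplL).baseChange K b
              ∈ LinearMap.range ((prMap K0 (slopeLE p K0 φL (i - 1))
                (slopeGE p K0 φL i) hcomplL).baseChange K) :=
            LinearMap.mem_range_self _ b
          rw [range_baseChange, prMap_range] at hmem2
          exact hmem2
        exact Submodule.mem_sup.mpr ⟨a, haF, b, hbA, hxab.symm⟩
  · -- cokernels
    intro Q _ _ π φQ FQ hπ hker hπφ hFQ
    have hmapπ : ∀ n : ℤ, Submodule.map π (slopePart p K0 φ' n) ≤ slopePart p K0 φQ n :=
      fun n => map_span_eigen_le K0 π hπφ _
    have hRstab : ∀ x ∈ LinearMap.range f, φ' x ∈ LinearMap.range f := by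
      rintro _ ⟨y, rfl⟩
      rw [← hfφ]
      exact ⟨φ y, rfl⟩
    have hC : ∀ n : ℤ, slopePart p K0 φQ n = Submodule.map π (slopePart p K0 φ' n) := by
      intro n
      refine le_antisymm ?_ (hmapπ n)
      rw [show slopePart p K0 φQ n
        = Submodule.span K0 {q | φQ q = (p : K0) ^ n • q} from rfl, Submodule.span_le]
      intro q hq
      obtain ⟨m', rfl⟩ := hπ q
      have hrel : φ' m' - (p : K0) ^ n • m' ∈ LinearMap.range f := by
        rw [← hker, LinearMap.mem_ker, map_sub, map_smul, hπφ,
          show φQ (π m') = (p : K0) ^ n • π m' from hq, sub_self]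
      have hm'T : m' ∈ ⨆ j : ℤ, slopePart p K0 φ' j := hsupM' ▸ Submodule.mem_top
      obtain ⟨l, hl, hsum⟩ := (Submodule.mem_iSup_iff_exists_finsupp _ _).mp hm'T
      have hsum' : ∑ j ∈ l.support, l j = m' := hsum
      have hcomp : ∀ j, φ' (l j) - (p : K0) ^ n • l j ∈ LinearMap.range f := by
        refine components_mem K0 hindM' hGrange l.support
          (fun j => φ' (l j) - (p : K0) ^ n • l j)
          (fun j => sub_mem (hstabM' j _ (hl j)) (Submodule.smul_mem _ _ (hl j)))
          (fun j hj => by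
            show φ' (l j) - (p : K0) ^ n • l j = 0
            rw [Finsupp.notMem_support_iff.mp hj, phi_zero K0 hφ'.map_smul,
              smul_zero, sub_zero])
          ?_ hrel
        rw [Finset.sum_sub_distrib, ← phi_sum hφ'.map_add, ← Finset.smul_sum, hsum']
      have hEIG : ∀ j, j ≠ n → l j ∈ LinearMap.range f := fun j hj =>
        eig_mem K0 hφ'.map_add hφ'.map_smul (fun k => rfl) hindM' hj
          (LinearMap.range f) hRstab (hl j) (hcomp j)
      have hπm : π m' = π (l n) := by
        rw [← hsum', map_sum]
        by_cases hn : n ∈ l.support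
        · refine Finset.sum_eq_single_of_mem n hn (fun j _ hj => ?_)
          have hjr := hEIG j hj
          rw [← hker] at hjr
          exact LinearMap.mem_ker.mp hjr
        · have hln : l n = 0 := Finsupp.notMem_support_iff.mp hn
          rw [hln, map_zero]
          refine Finset.sum_eq_zero fun j hjs => ?_
          have hjne : j ≠ n := fun hh => hn (hh ▸ hjs)
          have hjr := hEIG j hjne
          rw [← hker] at hjr
          exact LinearMap.mem_ker.mp hjr
      rw [hπm]
      exact Submodule.mem_map_of_mem (hl n)
    have hRgr : LinearMap.ker π ≤ ⨆ n : ℤ, slopePart p K0 φ' n ⊓ LinearMap.ker π := by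
      rw [hker]
      exact hGrange
    have hindQ : iSupIndep (fun n : ℤ => slopePart p K0 φQ n) := by
      rw [iSupIndep_def]
      intro n
      rw [Submodule.disjoint_def]
      intro x hx1 hx2
      rw [hC n] at hx1
      obtain ⟨an, han, hxan⟩ := hx1
      have hx2' : x ∈ Submodule.map π (⨆ j, ⨆ _ : j ≠ n, slopePart p K0 φ' j) := by
        have he : (⨆ j, ⨆ _ : j ≠ n, Submodule.map π (slopePart p K0 φ' j))
            = Submodule.map π (⨆ j, ⨆ _ : j ≠ n, slopePart p K0 φ' j) := by
          rw [Submodule.map_iSup]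
          exact iSup_congr fun j => by rw [Submodule.map_iSup]
        rw [← he]
        simpa only [hC] using hx2
      obtain ⟨b, hb, hxb⟩ := hx2'
      obtain ⟨l, hl, hsumb⟩ := (Submodule.mem_iSup_iff_exists_finsupp _ _).mp hb
      have hsumb' : ∑ j ∈ l.support, l j = b := hsumb
      have hln : l n = 0 := by
        have hlb := hl n
        rw [iSup_neg (not_not_intro rfl)] at hlb
        simpa using hlb
      have hlS : ∀ j, l j ∈ slopePart p K0 φ' j := fun j =>
        (iSup_le fun _ => le_rfl : (⨆ _ : j ≠ n, slopePart p K0 φ' j) ≤ slopePart p K0 φ' j)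
          (hl j)
      have hker1 : an - b ∈ LinearMap.ker π := by
        rw [LinearMap.mem_ker, map_sub, hxan, hxb, sub_self]
      have hgS : ∀ j, ((if j = n then an else 0) - l j) ∈ slopePart p K0 φ' j := by
        intro j
        refine sub_mem ?_ (hlS j)
        by_cases hj : j = n
        · subst hj; simp only [if_pos rfl]; exact han
        · simp only [if_neg hj]; exact zero_mem _
      have hg0 : ∀ j ∉ insert n l.support, ((if j = n then an else 0) - l j) = 0 := by
        intro j hj
        simp only [Finset.mem_insert, not_or] at hj
        simp [hj.1, Finsupp.notMem_support_iff.mp hj.2]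
      have hgsum : ∑ j ∈ insert n l.support,
          ((if j = n then an else 0) - l j) = an - b := by
        rw [Finset.sum_sub_distrib]
        congr 1
        · simp
        · rw [Finset.sum_insert_of_eq_zero_if_notMem (fun _ => hln)]
          exact hsumb'
      have hcompn := components_mem K0 hindM' (hker ▸ hRgr) (insert n l.support)
        (fun j => (if j = n then an else 0) - l j) hgS hg0 hgsum
        (by rw [hker] at hker1; exact hker1) n
      have han' : an ∈ LinearMap.ker π := by
        rw [hker]
        have hgn : (if n = n then an else 0) - l n = an := by simp [hln]
        rw [← hgn]
        exact hcompn
      rw [← hxan]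
      exact LinearMap.mem_ker.mp han'
    have hsupQ : (⨆ n : ℤ, slopePart p K0 φQ n) = ⊤ := by
      rw [Submodule.eq_top_iff']
      intro q
      obtain ⟨m', rfl⟩ := hπ q
      have hm'T : m' ∈ ⨆ n : ℤ, slopePart p K0 φ' n := hsupM' ▸ Submodule.mem_top
      have hmem := Submodule.mem_map_of_mem (f := π) hm'T
      rw [Submodule.map_iSup] at hmem
      exact (iSup_mono fun n => hmapπ n) hmem
    refine ⟨(DirectSum.isInternal_submodule_iff_iSupIndep_and_iSup_eq_top _).mpr
      ⟨hindQ, hsupQ⟩, ?_, ?_⟩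
    · intro i j hij
      rw [hFQ, hFQ]
      exact Submodule.map_mono (h'.antitone hij)
    · intro i
      have hAQ : (slopeLE p K0 φQ (i - 1)).baseChange K
          = Submodule.map (π.baseChange K) ((slopeLE p K0 φ' (i - 1)).baseChange K) := by
        have h1 : slopeLE p K0 φQ (i - 1)
            = Submodule.map π (slopeLE p K0 φ' (i - 1)) := by
          show (⨆ n : ℤ, ⨆ _ : n ≤ i - 1, slopePart p K0 φQ n)
            = Submodule.map π (⨆ n : ℤ, ⨆ _ : n ≤ i - 1, slopePart p K0 φ' n)
          rw [Submodule.map_iSup]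
          refine iSup_congr fun n => ?_
          rw [Submodule.map_iSup]
          exact iSup_congr fun _ => hC n
        rw [h1, ← baseChange_map]
      have hexactK : LinearMap.ker (π.baseChange K) = LinearMap.range (f.baseChange K) :=
        baseChange_exact K0 K f π hker
      have hπK : Function.Surjective (π.baseChange K) := by
        rw [LinearMap.baseChange_eq_ltensor]
        exact LinearMap.lTensor_surjective K hπ
      constructor
      · rw [Submodule.disjoint_def]
        intro x hx1 hx2
        rw [hFQ] at hx1
        obtain ⟨u, hu, hxu⟩ := hx1
        rw [hAQ] at hx2
        obtain ⟨v, hv, hxv⟩ := hx2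
        obtain ⟨w, hw⟩ : u - v ∈ LinearMap.range (f.baseChange K) := by
          rw [← hexactK, LinearMap.mem_ker, map_sub, hxu, hxv, sub_self]
        have hwmem : w ∈ F i ⊔ (slopeLE p K0 φ (i - 1)).baseChange K := by
          rw [(h.compl i).sup_eq_top]; exact Submodule.mem_top
        obtain ⟨w₁, hw₁, w₂, hw₂, hw12⟩ := Submodule.mem_sup.mp hwmem
        have huvw : u - v = f.baseChange K w₁ + f.baseChange K w₂ := by
          rw [← map_add, hw12, hw]
        have hkey : u - f.baseChange K w₁ = v + f.baseChange K w₂ := by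
          calc u - f.baseChange K w₁ = (u - v) - f.baseChange K w₁ + v := by abel
          _ = v + f.baseChange K w₂ := by rw [huvw]; abel
        have hleft : u - f.baseChange K w₁ ∈ F' i :=
          sub_mem hu (hfF i (Submodule.mem_map_of_mem hw₁))
        have hright : v + f.baseChange K w₂ ∈ (slopeLE p K0 φ' (i - 1)).baseChange K :=
          add_mem hv (hmapfLE (i - 1) (Submodule.mem_map_of_mem hw₂))
        have h0 : u - f.baseChange K w₁ = 0 :=
          Submodule.disjoint_def.mp (h'.compl i).disjoint _ hleft (hkey ▸ hright)
        have hu' : u ∈ LinearMap.range (f.baseChange K) := ⟨w₁, (sub_eq_zero.mp h0).symm⟩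
        rw [← hexactK, LinearMap.mem_ker] at hu'
        rw [← hxu]
        exact hu'
      · rw [codisjoint_iff_le_sup]
        intro x _
        obtain ⟨y, rfl⟩ := hπK x
        have hy : y ∈ F' i ⊔ (slopeLE p K0 φ' (i - 1)).baseChange K := by
          rw [(h'.compl i).sup_eq_top]; exact Submodule.mem_top
        obtain ⟨u, hu, v, hv, huv⟩ := Submodule.mem_sup.mp hy
        refine Submodule.mem_sup.mpr ⟨π.baseChange K u, ?_, π.baseChange K v, ?_, ?_⟩
        · rw [hFQ]; exact Submodule.mem_map_of_mem hu
        · rw [hAQ]; exact Submodule.mem_map_of_mem hv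
        · rw [← map_add, huv]


end MT
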